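/- For any positive integer m and odd positive integer k, S^{(m)}((2m)^k) = (2/(2m+1)) · Σ_{l=1}^{m} (tan(πl/(2m+1)))^k · sin(2πl/(2m+1)). -/

import Mathlib

open Real Finset


private noncomputable def gg (b : ℕ) (z : ℂ) : ℂ := ∑ d ∈ Finset.range b, (-1 : ℂ)^d * z^d

private noncomputable def FF (b k : ℕ) (z : ℂ) : ℂ :=
  ∑ n ∈ Finset.range (b^k), (-1 : ℂ)^((Nat.digits b n).sum) * z^n

private lemma digitsum_rec {b : ℕ} (hb : 2 ≤ b) (d a : ℕ) (hd : d < b) :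
    (Nat.digits b (d + b * a)).sum = d + (Nat.digits b a).sum := by
  rcases Nat.eq_zero_or_pos (d + b * a) with h | h
  · have hd0 : d = 0 := by omega
    have ha0 : a = 0 := by
      rcases Nat.eq_zero_or_pos a with h' | h'
      · exact h'
      · exfalso; nlinarith
    simp [hd0, ha0]
  · rw [Nat.digits_def' (by omega : 1 < b) h]
    have h1 : (d + b * a) % b = d := by
      rw [Nat.add_mul_mod_self_left, Nat.mod_eq_of_lt hd]
    have h2 : (d + b * a) / b = a := by
      rw [Nat.add_mul_div_left _ _ (by omega : 0 < b), Nat.div_eq_of_lt hd]; omega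
    rw [h1, h2]; simp

private lemma FF_succ {b : ℕ} (hb : 2 ≤ b) (k : ℕ) (z : ℂ) :
    FF b (k+1) z = gg b z * FF b k (z^b) := by
  unfold FF gg
  rw [Finset.sum_mul_sum, ← Finset.sum_product']
  refine Finset.sum_nbij' (fun n => (n % b, n / b)) (fun p => p.1 + b * p.2) ?_ ?_ ?_ ?_ ?_
  · intro n hn
    simp only [Finset.mem_range, Finset.mem_product] at *
    constructor
    · exact Nat.mod_lt _ (by omega)
    · rw [Nat.div_lt_iff_lt_mul (by omega : 0 < b)]
      calc n < b^(k+1) := hn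
        _ = b^k * b := by ring
  · intro p hp
    simp only [Finset.mem_range, Finset.mem_product] at *
    calc p.1 + b * p.2 < b + b * p.2 := by omega
      _ = b * (1 + p.2) := by ring
      _ ≤ b * b^k := by
          apply Nat.mul_le_mul_left; omega
      _ = b^(k+1) := by ring
  · intro n _; exact Nat.mod_add_div n b
  · intro p hp
    simp only [Finset.mem_range, Finset.mem_product] at hp
    have h1 : (p.1 + b * p.2) % b = p.1 := by
      rw [Nat.add_mul_mod_self_left, Nat.mod_eq_of_lt hp.1]
    have h2 : (p.1 + b * p.2) / b = p.2 := by
      rw [Nat.add_mul_div_left _ _ (by omega : 0 < b), Nat.div_eq_of_lt hp.1]; omega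
    simp [h1, h2]
  · intro n _
    have hrec := digitsum_rec hb (n % b) (n / b) (Nat.mod_lt _ (by omega : 0 < b))
    rw [Nat.mod_add_div] at hrec
    rw [hrec]
    rw [pow_add]
    have : z ^ n = z ^ (n % b) * (z^b) ^ (n / b) := by
      rw [← pow_mul, ← pow_add, Nat.mod_add_div]
    rw [this]; ring

private lemma FF_prod {b : ℕ} (hb : 2 ≤ b) (k : ℕ) (z : ℂ) :
    FF b k z = ∏ i ∈ Finset.range k, gg b (z ^ (b^i)) := by
  induction k generalizing z with
  | zero => simp [FF]
  | succ k ih =>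
    rw [FF_succ hb, ih (z^b), Finset.prod_range_succ', mul_comm]
    congr 1
    · exact Finset.prod_congr rfl fun i _ => by rw [← pow_mul, ← pow_succ']
    · simp


private noncomputable def omg (q : ℕ) : ℂ := Complex.exp (2 * Real.pi * Complex.I / q)

private lemma omg_pow_q {q : ℕ} (hq : 0 < q) : (omg q) ^ q = 1 := by
  have hq' : (q : ℂ) ≠ 0 := Nat.cast_ne_zero.mpr hq.ne'
  rw [omg, ← Complex.exp_nat_mul]
  have : (q : ℂ) * (2 * Real.pi * Complex.I / q) = 2 * Real.pi * Complex.I := by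
    field_simp
  rw [this, Complex.exp_two_pi_mul_I]

private lemma omg_pow_eq_one_iff {q : ℕ} (hq : 0 < q) (n : ℕ) :
    (omg q) ^ n = 1 ↔ q ∣ n := by
  have hq' : (q : ℂ) ≠ 0 := Nat.cast_ne_zero.mpr hq.ne'
  rw [omg, ← Complex.exp_nat_mul, Complex.exp_eq_one_iff]
  constructor
  · rintro ⟨t, ht⟩
    have hI : (Complex.I * (2 * (Real.pi : ℂ))) ≠ 0 := by
      simp [Real.pi_ne_zero, Complex.I_ne_zero]
    have h2 : (n:ℂ) * (Complex.I * (2 * (Real.pi:ℂ))) = ((t * q : ℤ) : ℂ) * (Complex.I * (2 * (Real.pi:ℂ))) := by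
      field_simp at ht
      push_cast
      linear_combination (Complex.I * (2 * (Real.pi:ℂ))) * ht
    have hn : (n : ℤ) = t * q := by exact_mod_cast mul_right_cancel₀ hI h2
    have : (q:ℤ) ∣ (n:ℤ) := ⟨t, by rw [hn, mul_comm]⟩
    exact Int.natCast_dvd_natCast.mp this
  · rintro ⟨c, rfl⟩
    refine ⟨c, ?_⟩
    push_cast
    field_simp

private lemma omg_filter {q : ℕ} (hq : 0 < q) (n : ℕ) :
    ∑ j ∈ Finset.range q, ((omg q) ^ n) ^ j = if q ∣ n then (q : ℂ) else 0 := by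
  by_cases h : q ∣ n
  · rw [if_pos h]
    have h1 : (omg q) ^ n = 1 := (omg_pow_eq_one_iff hq n).mpr h
    simp [h1]
  · rw [if_neg h]
    have h1 : (omg q) ^ n ≠ 1 := fun hc => h ((omg_pow_eq_one_iff hq n).mp hc)
    rw [geom_sum_eq h1]
    have : ((omg q) ^ n) ^ q = 1 := by
      rw [← pow_mul, mul_comm, pow_mul, omg_pow_q hq, one_pow]
    simp [this]



private lemma gg_one (m : ℕ) : gg (2*m) 1 = 0 := by
  unfold gg
  simp only [one_pow, mul_one]
  rw [neg_one_geom_sum]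
  simp [even_two_mul]

private lemma one_add_exp (θ : ℝ) :
    (1 : ℂ) + Complex.exp (θ * Complex.I) =
      2 * (Real.cos (θ/2) : ℂ) * Complex.exp ((θ/2 : ℝ) * Complex.I) := by
  have h1 := Real.cos_two_mul (θ/2)
  have h2 := Real.sin_two_mul (θ/2)
  rw [show 2*(θ/2) = θ by ring] at h1 h2
  rw [Complex.exp_mul_I, Complex.exp_mul_I, ← Complex.ofReal_cos, ← Complex.ofReal_sin,
    ← Complex.ofReal_cos, ← Complex.ofReal_sin, h1, h2]
  push_cast
  ring

private lemma exp_neg_mul_I (θ : ℝ) :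
    Complex.exp ((-θ : ℝ) * Complex.I) =
      (Real.cos θ : ℂ) - (Real.sin θ : ℂ) * Complex.I := by
  rw [Complex.exp_mul_I]
  push_cast
  rw [Complex.cos_neg, Complex.sin_neg, ← Complex.ofReal_cos, ← Complex.ofReal_sin]
  ring

private lemma gg_eval (m : ℕ) (hm : 0 < m) (θ : ℝ)
    (h1 : Complex.exp (θ * Complex.I) ^ (2*m+1) = 1)
    (h2 : Real.cos (θ/2) ≠ 0) :
    gg (2*m) (Complex.exp (θ * Complex.I)) =
      Complex.I * (Real.tan (θ/2) : ℂ) * Complex.exp ((-θ : ℝ) * Complex.I) := by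
  set z := Complex.exp (θ * Complex.I) with hz
  set e := Complex.exp ((-θ : ℝ) * Complex.I) with he
  set c : ℝ := Real.cos (θ/2)
  set s : ℝ := Real.sin (θ/2)
  have hzne : z ≠ 0 := Complex.exp_ne_zero _
  have hcne : (c : ℂ) ≠ 0 := Complex.ofReal_ne_zero.mpr h2
  have hone : (1 : ℂ) + z = 2 * (c : ℂ) * Complex.exp ((θ/2 : ℝ) * Complex.I) := one_add_exp θ
  have hne : (1 : ℂ) + z ≠ 0 := by
    rw [hone]
    simp [Complex.exp_ne_zero, h2]
  have hzn1 : -z ≠ 1 := by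
    intro hc
    apply hne
    linear_combination -hc
  have hgeom : gg (2*m) z = (1 - z^(2*m)) / (1 + z) := by
    unfold gg
    have hd : ∀ d : ℕ, (-1 : ℂ)^d * z^d = (-z)^d := by
      intro d; rw [neg_pow]; ring
    simp_rw [hd]
    rw [geom_sum_eq hzn1, Even.neg_pow (even_two_mul m)]
    rw [div_eq_div_iff (by intro hc; apply hzn1; linear_combination hc) hne]
    ring
  have h3 : e * z = 1 := by
    rw [he, hz, ← Complex.exp_add,
      show ((-θ:ℝ):ℂ) * Complex.I + (θ:ℂ) * Complex.I = 0 by push_cast; ring]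
    exact Complex.exp_zero
  have hzinv : z^(2*m) = e := by
    have hmul : z * z^(2*m) = 1 := by rw [← pow_succ']; exact h1
    have e1 : z ^ (2*m) = z⁻¹ := by
      rw [inv_eq_one_div, eq_div_iff hzne]; linear_combination hmul
    have e2 : e = z⁻¹ := by
      rw [inv_eq_one_div, eq_div_iff hzne]; exact h3
    rw [e1, e2]
  have hcos : Real.cos θ = 2*c^2 - 1 := by
    have := Real.cos_two_mul (θ/2); rw [show 2*(θ/2) = θ by ring] at this; exact this
  have hsin : Real.sin θ = 2*s*c := by
    have := Real.sin_two_mul (θ/2); rw [show 2*(θ/2) = θ by ring] at this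
    rw [this]
  have hp : (s:ℂ)^2 + (c:ℂ)^2 = 1 := by exact_mod_cast Real.sin_sq_add_cos_sq (θ/2)
  have hkey : (c:ℂ) * (1 - e) = Complex.I * (s:ℂ) * (1 + e) := by
    rw [he, exp_neg_mul_I θ, hcos, hsin]
    push_cast
    linear_combination (-2*(c:ℂ)) * hp + 2*(c:ℂ)*(s:ℂ)^2*Complex.I_sq
  have ht : (Real.tan (θ/2) : ℂ) = (s:ℂ) / (c:ℂ) := by
    rw [Real.tan_eq_sin_div_cos, Complex.ofReal_div]
  have hez : e * (1 + z) = 1 + e := by linear_combination h3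
  rw [hgeom, hzinv, div_eq_iff hne, ht]
  have expand : Complex.I * ((s:ℂ)/(c:ℂ)) * e * (1 + z) = Complex.I * ((s:ℂ)/(c:ℂ)) * (1 + e) := by
    rw [mul_assoc, hez]
  rw [expand]
  field_simp
  linear_combination hkey


private lemma pow_b_pow (m : ℕ) {u : ℂ} (hu : u ≠ 0) (h : u^(2*m+1) = 1) (i : ℕ) :
    u^((2*m)^i) = if Even i then u else u⁻¹ := by
  induction i with
  | zero => simp
  | succ i ih =>
    have hb : u^(2*m) = u⁻¹ := by
      rw [inv_eq_one_div, eq_div_iff hu, ← pow_succ]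
      exact h
    have hstep : u^((2*m)^(i+1)) = (u^((2*m)^i))^(2*m) := by
      rw [← pow_mul, pow_succ]
    rw [hstep, ih]
    by_cases he : Even i
    · rw [if_pos he, if_neg (by simp [Nat.even_add_one, he])]
      exact hb
    · rw [if_neg he, if_pos (by simp [Nat.even_add_one, he])]
      rw [inv_pow, hb, inv_inv]
  
private lemma prod_alt (A B : ℂ) (t : ℕ) :
    ∏ i ∈ Finset.range (2*t+1), (if Even i then A else B) = A^(t+1) * B^t := by
  induction t with
  | zero => simp
  | succ t ih =>
    rw [show 2*(t+1)+1 = (2*t+1)+1+1 by ring]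
    rw [Finset.prod_range_succ, Finset.prod_range_succ, ih]
    rw [if_neg (by simp [Nat.even_add_one, parity_simps]), if_pos (by simp [parity_simps])]
    ring

def S (m x : ℕ) : ℤ :=
  ∑ n ∈ Finset.range x, if (2 * m + 1) ∣ n then (-1 : ℤ) ^ ((Nat.digits (2 * m) n).sum) else 0

private lemma key_sum (m k : ℕ) :
    ((2*m+1 : ℕ) : ℂ) * ((S m ((2*m)^k) : ℤ) : ℂ) =
      ∑ j ∈ Finset.range (2*m+1), FF (2*m) k ((omg (2*m+1))^j) := by
  have hq : 0 < 2*m+1 := by omega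
  unfold S FF
  rw [Int.cast_sum, Finset.mul_sum, Finset.sum_comm]
  apply Finset.sum_congr rfl
  intro n _
  have h5 : ∑ j ∈ Finset.range (2*m+1), (-1:ℂ)^((Nat.digits (2*m) n).sum) * ((omg (2*m+1))^j)^n
      = (-1:ℂ)^((Nat.digits (2*m) n).sum) * (if (2*m+1) ∣ n then ((2*m+1:ℕ):ℂ) else 0) := by
    rw [← Finset.mul_sum, ← omg_filter hq n]
    congr 1
    apply Finset.sum_congr rfl
    intro j _
    rw [← pow_mul, ← pow_mul, Nat.mul_comm j n]
  rw [h5]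
  by_cases h : (2*m+1) ∣ n
  · rw [if_pos h]; push_cast [if_pos h]; ring
  · rw [if_neg h]; push_cast [if_neg h]; ring

private lemma cos_ne (m l : ℕ) (hm : 0 < m) :
    Real.cos (Real.pi * l / (2*(m:ℝ)+1)) ≠ 0 := by
  intro hc
  rw [Real.cos_eq_zero_iff] at hc
  obtain ⟨n, hn⟩ := hc
  have hd : (2*(m:ℝ)+1) ≠ 0 := by positivity
  have hπ : (Real.pi : ℝ) ≠ 0 := Real.pi_ne_zero
  have hr : (2*(l:ℝ)) = (2*(n:ℝ)+1) * (2*(m:ℝ)+1) := by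
    field_simp at hn
    apply mul_left_cancel₀ hπ
    ring_nf
    ring_nf at hn
    linear_combination (Real.pi : ℝ) * hn
  have hz : (2*(l:ℤ)) = (2*n+1) * (2*(m:ℤ)+1) := by exact_mod_cast hr
  have h4 : ∃ p : ℤ, (2*n+1)*(2*(m:ℤ)+1) = 2*p + 1 := ⟨2*n*m+n+m, by ring⟩
  obtain ⟨p, hp⟩ := h4
  omega

private lemma omg_pow_as_exp (m l : ℕ) :
    (omg (2*m+1))^l = Complex.exp (((2 * Real.pi * l / (2*(m:ℝ)+1)) : ℝ) * Complex.I) := by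
  have hq' : ((2*m+1 : ℕ) : ℂ) ≠ 0 := Nat.cast_ne_zero.mpr (by omega)
  rw [omg, ← Complex.exp_nat_mul]
  congr 1
  have hd : (2*(m:ℂ)+1) ≠ 0 := by
    intro hc; apply hq'; push_cast; linear_combination hc
  push_cast
  field_simp

private lemma FF_eval (m t : ℕ) (hm : 0 < m) (l : ℕ) (hl1 : 1 ≤ l) (hl2 : l ≤ 2*m) :
    FF (2*m) (2*t+1) ((omg (2*m+1))^l) =
      Complex.I * ((Real.tan (Real.pi * l / (2*(m:ℝ)+1)) : ℝ) : ℂ)^(2*t+1) *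
        Complex.exp (((-(2 * Real.pi * l / (2*(m:ℝ)+1))) : ℝ) * Complex.I) := by
  have hb : (2:ℕ) ≤ 2*m := by omega
  have hq : 0 < 2*m+1 := by omega
  set θ : ℝ := 2 * Real.pi * l / (2*(m:ℝ)+1) with hθ
  have hu : (omg (2*m+1))^l = Complex.exp ((θ:ℝ) * Complex.I) := omg_pow_as_exp m l
  set u : ℂ := Complex.exp ((θ:ℝ) * Complex.I) with hudef
  have h1 : u ^ (2*m+1) = 1 := by
    rw [← hu, ← pow_mul, Nat.mul_comm l (2*m+1), pow_mul, omg_pow_q hq, one_pow]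
  have hune : u ≠ 0 := Complex.exp_ne_zero _
  have hhalf : θ/2 = Real.pi * l / (2*(m:ℝ)+1) := by rw [hθ]; ring
  have hcos : Real.cos (θ/2) ≠ 0 := by rw [hhalf]; exact cos_ne m l hm
  have hA : gg (2*m) u = Complex.I * (Real.tan (θ/2) : ℂ) * Complex.exp ((-θ : ℝ) * Complex.I) :=
    gg_eval m hm θ h1 hcos
  have huinv : u⁻¹ = Complex.exp (((-θ : ℝ)) * Complex.I) := by
    rw [← Complex.exp_neg]
    congr 1
    push_cast
    ring
  have h1' : Complex.exp (((-θ:ℝ)) * Complex.I) ^ (2*m+1) = 1 := by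
    rw [← huinv, inv_pow, h1, inv_one]
  have hcos' : Real.cos ((-θ)/2) ≠ 0 := by
    rw [show (-θ)/2 = -(θ/2) by ring, Real.cos_neg]; exact hcos
  have hB0 : gg (2*m) (Complex.exp (((-θ:ℝ)) * Complex.I)) =
      Complex.I * (Real.tan ((-θ)/2) : ℂ) * Complex.exp ((-(-θ) : ℝ) * Complex.I) :=
    gg_eval m hm (-θ) h1' hcos'
  have hB : gg (2*m) u⁻¹ =
      -(Complex.I * (Real.tan (θ/2) : ℂ) * Complex.exp ((θ : ℝ) * Complex.I)) := by
    rw [huinv, hB0, show (-θ)/2 = -(θ/2) by ring, Real.tan_neg, show -(-θ) = θ by ring]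
    push_cast
    ring
  have hEE : Complex.exp ((-θ : ℝ) * Complex.I) * Complex.exp ((θ:ℝ) * Complex.I) = 1 := by
    rw [← Complex.exp_add, show ((-θ:ℝ):ℂ) * Complex.I + (θ:ℝ) * Complex.I = 0 by push_cast; ring]
    exact Complex.exp_zero
  rw [hu, FF_prod hb]
  have hstep : ∀ i ∈ Finset.range (2*t+1),
      gg (2*m) (u ^ ((2*m)^i)) = if Even i then gg (2*m) u else gg (2*m) u⁻¹ := by
    intro i _
    rw [pow_b_pow m hune h1 i]
    by_cases he : Even i
    · rw [if_pos he, if_pos he]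
    · rw [if_neg he, if_neg he]
  rw [Finset.prod_congr rfl hstep, prod_alt, hA, hB]
  set T : ℂ := (Real.tan (θ/2) : ℂ) with hT
  set E1 : ℂ := Complex.exp ((-θ : ℝ) * Complex.I) with hE1
  set E2 : ℂ := Complex.exp ((θ:ℝ) * Complex.I) with hE2
  have hAB : (Complex.I * T * E1) * (-(Complex.I * T * E2)) = T^2 := by
    have expand : (Complex.I * T * E1) * (-(Complex.I * T * E2))
        = -(Complex.I^2) * T^2 * (E1 * E2) := by ring
    rw [expand, Complex.I_sq, hEE]
    ring
  have hpow : (Complex.I * T * E1)^(t+1) * (-(Complex.I * T * E2))^t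
      = (Complex.I * T * E1) * (((Complex.I * T * E1)) * (-(Complex.I * T * E2)))^t := by
    rw [mul_pow, pow_succ]
    ring
  rw [hpow, hAB, ← pow_mul]
  have : Complex.I * T * E1 * T^(2*t) = Complex.I * T^(2*t+1) * E1 := by
    rw [pow_succ]
    ring
  rw [this, ← hhalf]

private lemma pair_sum (m t : ℕ) (hm : 0 < m) (hko : Odd (2*t+1)) (l : ℕ) (hl1 : 1 ≤ l) (hl2 : l ≤ m) :
    (Complex.I * ((Real.tan (Real.pi * l / (2*(m:ℝ)+1)) : ℝ) : ℂ)^(2*t+1) *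
        Complex.exp (((-(2 * Real.pi * l / (2*(m:ℝ)+1))) : ℝ) * Complex.I)) +
    (Complex.I * ((Real.tan (Real.pi * (((2*m+1-l : ℕ)):ℝ) / (2*(m:ℝ)+1)) : ℝ) : ℂ)^(2*t+1) *
        Complex.exp (((-(2 * Real.pi * (((2*m+1-l:ℕ)):ℝ) / (2*(m:ℝ)+1))) : ℝ) * Complex.I)) =
    ((2 * (Real.tan (Real.pi * l / (2*(m:ℝ)+1)))^(2*t+1) *
        Real.sin (2 * Real.pi * l / (2*(m:ℝ)+1)) : ℝ) : ℂ) := by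
  have hd : (2*(m:ℝ)+1) ≠ 0 := by positivity
  have hc1 : ((2*m+1-l : ℕ) : ℝ) = 2*(m:ℝ)+1-(l:ℝ) := by
    have : l ≤ 2*m+1 := by omega
    push_cast [Nat.cast_sub this]
    ring
  set α : ℝ := Real.pi * l / (2*(m:ℝ)+1) with hα
  have htan : Real.tan (Real.pi * (((2*m+1-l : ℕ)):ℝ) / (2*(m:ℝ)+1)) = -Real.tan α := by
    rw [hc1, show Real.pi * (2*(m:ℝ)+1-(l:ℝ)) / (2*(m:ℝ)+1) = Real.pi - α by rw [hα]; field_simp]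
    exact Real.tan_pi_sub α
  have hexp : Complex.exp (((-(2 * Real.pi * (((2*m+1-l:ℕ)):ℝ) / (2*(m:ℝ)+1))) : ℝ) * Complex.I)
      = Complex.exp (((2*α) : ℝ) * Complex.I) := by
    rw [hc1]
    have harg : -(2 * Real.pi * (2*(m:ℝ)+1-(l:ℝ)) / (2*(m:ℝ)+1)) = 2*α - 2*Real.pi := by
      rw [hα]; field_simp; ring
    rw [harg]
    have : ((2*α - 2*Real.pi : ℝ) : ℂ) * Complex.I
        = ((2*α : ℝ) : ℂ) * Complex.I + (-1 : ℤ) * (2 * (Real.pi:ℂ) * Complex.I) := by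
      push_cast; ring
    rw [this, Complex.exp_add, Complex.exp_int_mul_two_pi_mul_I, mul_one]
  have hdiff : Complex.exp (((-(2*α)) : ℝ) * Complex.I) - Complex.exp (((2*α) : ℝ) * Complex.I)
      = -(2 * (Real.sin (2*α) : ℂ) * Complex.I) := by
    rw [exp_neg_mul_I, Complex.exp_mul_I, ← Complex.ofReal_cos, ← Complex.ofReal_sin]
    ring
  have harg2 : (-(2 * Real.pi * (l:ℝ) / (2*(m:ℝ)+1))) = -(2*α) := by rw [hα]; ring
  rw [harg2, htan, hexp, show ((-Real.tan α : ℝ):ℂ) = -((Real.tan α : ℝ):ℂ) from Complex.ofReal_neg _, Odd.neg_pow hko]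
  have hsin : Real.sin (2 * Real.pi * (l:ℝ) / (2*(m:ℝ)+1)) = Real.sin (2*α) := by
    rw [hα]; congr 1; ring
  simp only [Complex.ofReal_mul, Complex.ofReal_pow, Complex.ofReal_ofNat]
  rw [hsin]
  set T : ℂ := ((Real.tan α : ℝ) : ℂ)
  have lhs_eq : Complex.I * T^(2*t+1) * Complex.exp (((-(2*α)) : ℝ) * Complex.I) +
      Complex.I * (-(T^(2*t+1))) * Complex.exp (((2*α):ℝ) * Complex.I)
      = Complex.I * T^(2*t+1) *
        (Complex.exp (((-(2*α)) : ℝ) * Complex.I) - Complex.exp (((2*α):ℝ) * Complex.I)) := by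
    ring
  rw [show (2*(α:ℂ)) * Complex.I = ((2*α:ℝ):ℂ) * Complex.I from by push_cast; ring]
  rw [lhs_eq, hdiff]
  linear_combination (-2*((Real.sin (2*α) : ℝ):ℂ)*T^(2*t+1)) * Complex.I_sq

private noncomputable def GG (m k l : ℕ) : ℝ :=
  2 * (Real.tan (Real.pi * l / (2*(m:ℝ)+1)))^k * Real.sin (2 * Real.pi * l / (2*(m:ℝ)+1))

theorem S_odd_k (m : ℕ) (hm : 0 < m) (k : ℕ) (hk : 0 < k) (hko : Odd k) :
    (S m ((2 * m) ^ k) : ℝ) =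
      (2 / (2 * m + 1)) * ∑ l ∈ Finset.Icc 1 m,
        (Real.tan (Real.pi * l / (2 * m + 1))) ^ k * Real.sin (2 * Real.pi * l / (2 * m + 1)) := by
  obtain ⟨t, ht⟩ := hko
  subst ht
  have hq : 0 < 2*m+1 := by omega
  have hb2 : (2:ℕ) ≤ 2*m := by omega
  have hqR : (2*(m:ℝ)+1) ≠ 0 := by positivity
  have hC : ((2*m+1 : ℕ) : ℂ) * ((S m ((2*m)^(2*t+1)) : ℤ) : ℂ) =
      ((∑ j ∈ Finset.range m, GG m (2*t+1) (j+1) : ℝ) : ℂ) := by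
    rw [key_sum m (2*t+1), Finset.sum_range_succ']
    have hf0 : FF (2*m) (2*t+1) ((omg (2*m+1))^0) = 0 := by
      rw [pow_zero, FF_prod hb2]
      simp only [one_pow]
      rw [Finset.prod_const, Finset.card_range, gg_one, zero_pow (by omega : 2*t+1 ≠ 0)]
    rw [hf0, add_zero, show Finset.range (2*m) = Finset.range (m+m) by rw [two_mul], Finset.sum_range_add]
    have hrefl : ∑ x ∈ Finset.range m, FF (2*m) (2*t+1) ((omg (2*m+1))^(m + x + 1))
        = ∑ j ∈ Finset.range m, FF (2*m) (2*t+1) ((omg (2*m+1))^(2*m - j)) := by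
      rw [← Finset.sum_range_reflect (fun x => FF (2*m) (2*t+1) ((omg (2*m+1))^(m + x + 1))) m]
      apply Finset.sum_congr rfl
      intro j hj
      have hj' : j < m := Finset.mem_range.mp hj
      congr 2
      omega
    rw [hrefl, ← Finset.sum_add_distrib, Complex.ofReal_sum]
    apply Finset.sum_congr rfl
    intro j hj
    have hj' : j < m := Finset.mem_range.mp hj
    rw [show 2*m - j = 2*m+1-(j+1) by omega,
      FF_eval m t hm (j+1) (by omega) (by omega),
      FF_eval m t hm (2*m+1-(j+1)) (by omega) (by omega)]
    unfold GG
    exact pair_sum m t hm ⟨t, rfl⟩ (j+1) (by omega) (by omega)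
  have hreal : ((2*m+1 : ℕ) : ℝ) * ((S m ((2*m)^(2*t+1)) : ℤ) : ℝ) =
      ∑ j ∈ Finset.range m, GG m (2*t+1) (j+1) := by
    exact_mod_cast hC
  have hshift : ∑ j ∈ Finset.range m, GG m (2*t+1) (j+1) = ∑ l ∈ Finset.Icc 1 m, GG m (2*t+1) l := by
    apply Finset.sum_nbij' (fun j => j+1) (fun l => l-1)
    · intro a ha; simp only [Finset.mem_range, Finset.mem_Icc] at *; omega
    · intro a ha; simp only [Finset.mem_range, Finset.mem_Icc] at *; omega
    · intro a _; omega
    · intro a ha; simp only [Finset.mem_Icc] at ha; omega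
    · intro a _; rfl
  rw [hshift] at hreal
  have hG2 : ∑ l ∈ Finset.Icc 1 m, GG m (2*t+1) l =
      2 * ∑ l ∈ Finset.Icc 1 m,
        (Real.tan (Real.pi * l / (2*(m:ℝ)+1)))^(2*t+1) * Real.sin (2 * Real.pi * l / (2*(m:ℝ)+1)) := by
    rw [Finset.mul_sum]
    apply Finset.sum_congr rfl
    intro l _
    unfold GG
    ring
  rw [hG2] at hreal
  push_cast at hreal
  rw [div_mul_eq_mul_div, eq_div_iff hqR]
  linear_combination hreal
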